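/- Fix k ∈ ℝ and for t > 0 let g(t) be the 4×4 diagonal matrix diag(−t^{(k²−1)/2}, t^{(k²−1)/2}, t^{1−k}, t^{1+k}). Then with the contracted Christoffel quantities defined from g (with ∂₀ = d/dt and ∂₁ = ∂₂ = ∂₃ = 0, since the components depend on t only), one has Γ₀(t) = −1/t and Γ₁(t) = Γ₂(t) = Γ₃(t) = 0 for every t > 0. -/

import Mathlib

/-- Partial derivative `∂_k g` of a matrix-valued function of `t` only:
`∂₀ = d/dt` and `∂₁ = ∂₂ = ∂₃ = 0`. -/
noncomputable def pdiffT (g : ℝ → Matrix (Fin 4) (Fin 4) ℝ) (k : Fin 4) (t : ℝ) :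
    Matrix (Fin 4) (Fin 4) ℝ :=
  if k = 0 then Matrix.of (fun m i => deriv (fun s => g s m i) t) else 0

/-- The Christoffel quantities Γ_{kmi} = (1/2)(∂_k g_{mi} + ∂_i g_{mk} − ∂_m g_{ki}). -/
noncomputable def ΓlowT (g : ℝ → Matrix (Fin 4) (Fin 4) ℝ) (k m i : Fin 4) (t : ℝ) : ℝ :=
  (1 / 2) * (pdiffT g k t m i + pdiffT g i t m k - pdiffT g m t k i)

/-- The contracted Christoffel quantities Γ_m = Σ_{k,i} g^{ki} Γ_{kmi}. -/
noncomputable def ΓcontrT (g : ℝ → Matrix (Fin 4) (Fin 4) ℝ) (m : Fin 4) (t : ℝ) : ℝ :=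
  ∑ k : Fin 4, ∑ i : Fin 4, (g t)⁻¹ k i * ΓlowT g k m i t

/-- For the Kasner metric g = diag(−t^{(k²−1)/2}, t^{(k²−1)/2}, t^{1−k}, t^{1+k}),
the contracted Christoffel quantities satisfy Γ₀ = −1/t and Γ₁ = Γ₂ = Γ₃ = 0 for
every t > 0, independently of the asymptotic velocity k (equation (3.11)). -/
theorem stmt_13 (k : ℝ) :
    (let g : ℝ → Matrix (Fin 4) (Fin 4) ℝ := fun t =>
       Matrix.diagonal
         ![-(t ^ ((k ^ 2 - 1) / 2)), t ^ ((k ^ 2 - 1) / 2), t ^ (1 - k), t ^ (1 + k)]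
     ∀ t : ℝ, 0 < t →
       ΓcontrT g 0 t = -(1 / t) ∧ ΓcontrT g 1 t = 0 ∧
       ΓcontrT g 2 t = 0 ∧ ΓcontrT g 3 t = 0) := by
  intro g t ht
  have ht' : t ≠ 0 := ne_of_gt ht
  have hA : t ^ ((k ^ 2 - 1) / 2) ≠ 0 := (Real.rpow_pos_of_pos ht _).ne'
  have hB : t ^ (1 - k) ≠ 0 := (Real.rpow_pos_of_pos ht _).ne'
  have hC : t ^ (1 + k) ≠ 0 := (Real.rpow_pos_of_pos ht _).ne'
  have hd : ∀ p : ℝ, deriv (fun s : ℝ => s ^ p) t = p * t ^ (p - 1) := fun p =>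
    Real.deriv_rpow_const t p
  have hinv : (g t)⁻¹ = Matrix.diagonal
      ![-(t ^ ((k ^ 2 - 1) / 2))⁻¹, (t ^ ((k ^ 2 - 1) / 2))⁻¹,
        (t ^ (1 - k))⁻¹, (t ^ (1 + k))⁻¹] := by
    apply Matrix.inv_eq_right_inv
    rw [Matrix.diagonal_mul_diagonal]
    ext i j
    fin_cases i <;> fin_cases j <;>
      simp [Matrix.diagonal_apply, Matrix.one_apply] <;> field_simp
  simp only [ΓcontrT, ΓlowT, pdiffT, hinv, Fin.sum_univ_four,
    Matrix.diagonal_apply, Matrix.of_apply]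
  have e1 : t ^ (1 - k) = t / t ^ k := by
    rw [Real.rpow_sub ht, Real.rpow_one]
  have e2 : t ^ (1 + k) = t * t ^ k := by
    rw [Real.rpow_add ht, Real.rpow_one]
  have e3 : t ^ (-k) = (t ^ k)⁻¹ := Real.rpow_neg ht.le k
  have hk : t ^ k ≠ 0 := (Real.rpow_pos_of_pos ht _).ne'
  norm_num (config := { decide := true }) [g, Matrix.diagonal_apply, deriv_const, hd,
    Real.rpow_sub_one ht', Matrix.cons_val_zero, Matrix.cons_val_one, Matrix.head_cons, Matrix.cons_val]
  simp only [Matrix.cons_val, hd, Real.rpow_sub_one ht']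
  rw [e1, e2]
  field_simp
  ring
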